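/- Let d ≥ 1, let A and A' be nonempty finite alphabets, and let X ⊆ A^{ℤ^d} and X' ⊆ (A')^{ℤ^d} be aperiodic minimal subshifts. Suppose h : SX → SX' is a topological conjugacy, i.e. a homeomorphism with h(t +ᵥ T) = t +ᵥ h(T) for all t ∈ ℝ^d and T ∈ SX. Then there exist constants m, M > 0 and natural numbers a, b, N such that for all n ≥ max(N, a): m · p_X(n − a) ≤ p_{X'}(n) ≤ M · p_X(n + b). -/

import Mathlib

open Filter Topology

abbrev Zd (d : ℕ) := Fin d → ℤ
abbrev Rd (d : ℕ) := EuclideanSpace ℝ (Fin d)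

def toRd {d : ℕ} (n : Zd d) : Rd d := WithLp.toLp 2 (fun i => (n i : ℝ))

def shift {d : ℕ} {A : Type*} (n : Zd d) (ω : Zd d → A) : Zd d → A := fun k => ω (k - n)

structure IsSubshift {d : ℕ} {A : Type*} [TopologicalSpace A] (X : Set (Zd d → A)) : Prop where
  nonempty : X.Nonempty
  closed : IsClosed X
  shift_mem : ∀ n : Zd d, ∀ ω ∈ X, shift n ω ∈ X

def IsMinimal {d : ℕ} {A : Type*} [TopologicalSpace A] (X : Set (Zd d → A)) : Prop :=
  ∀ ω ∈ X, X ⊆ closure {ω' | ∃ n : Zd d, ω' = shift n ω}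

def IsAperiodic {d : ℕ} {A : Type*} (X : Set (Zd d → A)) : Prop :=
  ∀ ω ∈ X, ∀ n : Zd d, shift n ω = ω → n = 0

def suspRel {d : ℕ} {A : Type*} [TopologicalSpace A] (X : Set (Zd d → A)) :
    X × Rd d → X × Rd d → Prop :=
  fun p q => ∃ n : Zd d, (q.1 : Zd d → A) = shift n (p.1 : Zd d → A) ∧ q.2 = p.2 - toRd n

abbrev Susp {d : ℕ} {A : Type*} [TopologicalSpace A] (X : Set (Zd d → A)) :=
  Quot (suspRel X)

instance {d : ℕ} {A : Type*} [TopologicalSpace A] (X : Set (Zd d → A)) :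
    VAdd (Rd d) (Susp X) where
  vadd t := Quot.lift (fun p => Quot.mk (suspRel X) (p.1, p.2 + t))
    (fun p q hpq => by
      obtain ⟨n, h1, h2⟩ := hpq
      exact Quot.sound ⟨n, h1, by rw [h2]; first | exact sub_add_eq_add_sub _ _ _ | abel⟩)

def iota {d : ℕ} {A : Type*} [TopologicalSpace A] (X : Set (Zd d → A)) : X → Susp X :=
  fun ω => Quot.mk _ (ω, 0)

def box (d : ℕ) (n : ℕ) : Set (Zd d) := {k | ∀ i, |k i| ≤ (n : ℤ)}

noncomputable def complexity {d : ℕ} {A : Type*} (X : Set (Zd d → A)) (n : ℕ) : ℕ :=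
  Set.ncard ((fun ω => (fun k : box d n => ω k.1)) '' X)

noncomputable def repetitivity {d : ℕ} {A : Type*} (X : Set (Zd d → A)) (n : ℕ) : ℝ :=
  sInf {C : ℝ | 0 ≤ C ∧ ∀ ω ∈ X, ∀ ω₀ ∈ X, ∃ k : Zd d,
    ‖toRd k‖ ≤ C ∧ ∀ j ∈ box d n, shift k ω j = ω₀ j}

def IsCocycleFor {d : ℕ} {A A' : Type*} [TopologicalSpace A] [TopologicalSpace A']
    {X : Set (Zd d → A)} {X' : Set (Zd d → A')}
    (h : Susp X ≃ₜ Susp X') (c : Susp X × Rd d → Rd d) : Prop :=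
  ∀ (T : Susp X) (x : Rd d), h (x +ᵥ T) = c (T, x) +ᵥ h T

-- basic lemmas
theorem shift_shift {d : ℕ} {A : Type*} (a b : Zd d) (ω : Zd d → A) :
    shift a (shift b ω) = shift (a + b) ω := by
  funext k; simp [shift, sub_sub]

theorem shift_zero {d : ℕ} {A : Type*} (ω : Zd d → A) : shift (0 : Zd d) ω = ω := by
  funext k; simp [shift]

theorem toRd_apply {d : ℕ} (n : Zd d) (i : Fin d) : toRd n i = (n i : ℝ) := rfl

theorem toRd_add {d : ℕ} (a b : Zd d) : toRd (a + b) = toRd a + toRd b := by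
  ext i
  show ((a i + b i : ℤ) : ℝ) = (a i : ℝ) + (b i : ℝ)
  push_cast; ring

theorem toRd_zero {d : ℕ} : toRd (0 : Zd d) = 0 := by
  ext i
  show (((0 : Zd d) i : ℤ) : ℝ) = 0
  simp

theorem toRd_neg {d : ℕ} (a : Zd d) : toRd (-a) = -toRd a := by
  ext i
  show ((-(a i) : ℤ) : ℝ) = -(a i : ℝ)
  push_cast; ring

noncomputable def zfloor {d : ℕ} (x : Rd d) : Zd d := fun i => ⌊x i⌋

noncomputable def fracPart {d : ℕ} (x : Rd d) : Rd d := WithLp.toLp 2 (fun i => Int.fract (x i))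

theorem fracPart_eq {d : ℕ} (x : Rd d) : fracPart x = x - toRd (zfloor x) := by
  ext i
  show Int.fract (x i) = x i - ((⌊x i⌋ : ℤ) : ℝ)
  rfl

theorem zfloor_sub_int {d : ℕ} (x : Rd d) (n : Zd d) :
    zfloor (x - toRd n) = zfloor x - n := by
  funext i
  show ⌊x i - ((n i : ℤ) : ℝ)⌋ = ⌊x i⌋ - n i
  rw [Int.floor_sub_intCast]

theorem zfloor_add_int {d : ℕ} (x : Rd d) (n : Zd d) :
    zfloor (x + toRd n) = zfloor x + n := by
  funext i
  show ⌊x i + ((n i : ℤ) : ℝ)⌋ = ⌊x i⌋ + n i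
  rw [Int.floor_add_intCast]

theorem fracPart_sub_int {d : ℕ} (x : Rd d) (n : Zd d) :
    fracPart (x - toRd n) = fracPart x := by
  ext i
  show Int.fract (x i - ((n i : ℤ) : ℝ)) = Int.fract (x i)
  simp

theorem fracPart_add_int {d : ℕ} (x : Rd d) (n : Zd d) :
    fracPart (x + toRd n) = fracPart x := by
  ext i
  show Int.fract (x i + ((n i : ℤ) : ℝ)) = Int.fract (x i)
  simp

theorem fracPart_nonneg {d : ℕ} (x : Rd d) (i : Fin d) : 0 ≤ fracPart x i :=
  Int.fract_nonneg _

theorem fracPart_lt_one {d : ℕ} (x : Rd d) (i : Fin d) : fracPart x i < 1 :=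
  Int.fract_lt_one _

theorem suspRel_equiv {d : ℕ} {A : Type*} [TopologicalSpace A] (X : Set (Zd d → A)) :
    Equivalence (suspRel X) := by
  constructor
  · intro p
    exact ⟨0, (shift_zero _).symm, by rw [toRd_zero, sub_zero]⟩
  · rintro ⟨p1, p2⟩ ⟨q1, q2⟩ ⟨n, h1, h2⟩
    refine ⟨-n, ?_, ?_⟩
    · rw [h1, shift_shift]; simp [shift_zero]
    · rw [h2, toRd_neg]; abel
  · rintro p q r ⟨n, h1, h2⟩ ⟨m, h3, h4⟩
    refine ⟨m + n, ?_, ?_⟩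
    · rw [h3, h1, shift_shift]
    · rw [h4, h2, toRd_add]; abel

theorem susp_mk_eq_iff {d : ℕ} {A : Type*} [TopologicalSpace A] {X : Set (Zd d → A)}
    {p q : X × Rd d} : Quot.mk (suspRel X) p = Quot.mk (suspRel X) q ↔ suspRel X p q := by
  rw [Quot.eq]
  constructor
  · intro hh
    induction hh with
    | rel a b hab => exact hab
    | refl a => exact (suspRel_equiv X).refl a
    | symm a b _ ih => exact (suspRel_equiv X).symm ih
    | trans a b c _ _ ih1 ih2 => exact (suspRel_equiv X).trans ih1 ih2
  · exact Relation.EqvGen.rel p q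

noncomputable def canonRep {d : ℕ} {A : Type*} [TopologicalSpace A] {X : Set (Zd d → A)}
    (hX : IsSubshift X) : Susp X → X × Rd d :=
  Quot.lift (fun p => (⟨shift (zfloor p.2) p.1.1, hX.shift_mem _ _ p.1.2⟩, fracPart p.2))
    (by
      rintro p q ⟨n, h1, h2⟩
      refine Prod.ext (Subtype.ext ?_) ?_
      · show shift (zfloor p.2) (p.1 : Zd d → A) = shift (zfloor q.2) (q.1 : Zd d → A)
        rw [h1, h2, shift_shift, zfloor_sub_int]
        have hzz : zfloor p.2 - n + n = zfloor p.2 := by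
          funext i; show zfloor p.2 i - n i + n i = zfloor p.2 i; omega
        rw [hzz]
      · show fracPart p.2 = fracPart q.2
        rw [h2, fracPart_sub_int])

theorem canonRep_mk {d : ℕ} {A : Type*} [TopologicalSpace A] {X : Set (Zd d → A)}
    (hX : IsSubshift X) (p : X × Rd d) :
    canonRep hX (Quot.mk _ p) =
      (⟨shift (zfloor p.2) p.1.1, hX.shift_mem _ _ p.1.2⟩, fracPart p.2) := rfl

theorem canonRep_spec {d : ℕ} {A : Type*} [TopologicalSpace A] {X : Set (Zd d → A)}
    (hX : IsSubshift X) (T : Susp X) :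
    Quot.mk (suspRel X) (canonRep hX T) = T := by
  induction T using Quot.ind with
  | _ p =>
    rw [canonRep_mk]
    exact (Quot.sound ⟨zfloor p.2, rfl, by rw [fracPart_eq]⟩).symm
set_option linter.unusedSectionVars false

section Main

variable {d : ℕ} {A A' : Type*} [TopologicalSpace A] [TopologicalSpace A']
variable {X : Set (Zd d → A)} {X' : Set (Zd d → A')}

theorem vadd_mk (t : Rd d) (p : X × Rd d) :
    t +ᵥ Quot.mk (suspRel X) p = Quot.mk (suspRel X) (p.1, p.2 + t) := rfl

theorem susp_neg_vadd_vadd (y : Rd d) (T : Susp X) : (-y) +ᵥ (y +ᵥ T) = T := by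
  induction T using Quot.ind with
  | _ p =>
    rw [vadd_mk, vadd_mk]
    have : p.2 + y + -y = p.2 := by abel
    rw [this]

def shiftX (hX : IsSubshift X) (k : Zd d) (ω : X) : X :=
  ⟨shift k ω.1, hX.shift_mem k ω.1 ω.2⟩

theorem mk_shift (hX : IsSubshift X) (k : Zd d) (ω : X) (v : Rd d) :
    Quot.mk (suspRel X) (shiftX hX k ω, v) = toRd k +ᵥ Quot.mk (suspRel X) (ω, v) := by
  rw [vadd_mk]
  exact (Quot.sound ⟨k, rfl, by show v = v + toRd k - toRd k; abel⟩).symm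

theorem canonRep_vadd_int (hX : IsSubshift X) (k : Zd d) (T : Susp X) :
    canonRep hX (toRd k +ᵥ T) =
      (shiftX hX k (canonRep hX T).1, (canonRep hX T).2) := by
  induction T using Quot.ind with
  | _ p =>
    rw [vadd_mk, canonRep_mk, canonRep_mk]
    refine Prod.ext (Subtype.ext ?_) ?_
    · show shift (zfloor (p.2 + toRd k)) (p.1 : Zd d → A) =
        shift k (shift (zfloor p.2) (p.1 : Zd d → A))
      rw [zfloor_add_int, shift_shift, add_comm]
    · show fracPart (p.2 + toRd k) = fracPart p.2
      exact fracPart_add_int _ _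

noncomputable def GG (hX' : IsSubshift X') (h : Susp X ≃ₜ Susp X') (v : Rd d) (ω : X) :
    X' × Rd d := canonRep hX' (h (Quot.mk _ (ω, v)))

noncomputable def RR (hX' : IsSubshift X') (h : Susp X ≃ₜ Susp X') (v : Rd d) (ω : X) : A' :=
  ((GG hX' h v ω).1 : Zd d → A') 0

theorem GG_shift (hX : IsSubshift X) (hX' : IsSubshift X') (h : Susp X ≃ₜ Susp X')
    (hequiv : ∀ (t : Rd d) (T : Susp X), h (t +ᵥ T) = t +ᵥ h T)
    (v : Rd d) (k : Zd d) (ω : X) :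
    GG hX' h v (shiftX hX k ω) = (shiftX hX' k (GG hX' h v ω).1, (GG hX' h v ω).2) := by
  unfold GG
  rw [mk_shift, hequiv, canonRep_vadd_int]

theorem RR_shift (hX : IsSubshift X) (hX' : IsSubshift X') (h : Susp X ≃ₜ Susp X')
    (hequiv : ∀ (t : Rd d) (T : Susp X), h (t +ᵥ T) = t +ᵥ h T)
    (v : Rd d) (k : Zd d) (ω : X) :
    RR hX' h v (shiftX hX k ω) = ((GG hX' h v ω).1 : Zd d → A') (-k) := by
  unfold RR
  rw [GG_shift hX hX' h hequiv]
  show shift k ((GG hX' h v ω).1 : Zd d → A') 0 = _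
  show ((GG hX' h v ω).1 : Zd d → A') (0 - k) = _
  rw [zero_sub]

theorem GG_v (hX' : IsSubshift X') (h : Susp X ≃ₜ Susp X')
    (hequiv : ∀ (t : Rd d) (T : Susp X), h (t +ᵥ T) = t +ᵥ h T)
    (v : Rd d) (ω : X) :
    GG hX' h v ω = (shiftX hX' (zfloor ((GG hX' h 0 ω).2 + v)) (GG hX' h 0 ω).1,
      fracPart ((GG hX' h 0 ω).2 + v)) := by
  have h1 : Quot.mk (suspRel X) (ω, v) = v +ᵥ Quot.mk (suspRel X) (ω, (0 : Rd d)) := by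
    rw [vadd_mk, zero_add]
  have h2 : h (Quot.mk _ (ω, v)) = v +ᵥ Quot.mk _ (GG hX' h 0 ω) := by
    rw [h1, hequiv]
    congr 1
    exact (canonRep_spec hX' _).symm
  show canonRep hX' (h (Quot.mk _ (ω, v))) = _
  rw [h2, vadd_mk, canonRep_mk]
  rfl

theorem sigma_surj (hX : IsSubshift X) (hX' : IsSubshift X') (h : Susp X ≃ₜ Susp X')
    (hequiv : ∀ (t : Rd d) (T : Susp X), h (t +ᵥ T) = t +ᵥ h T)
    (ω' : X') : ∃ ω : X, (GG hX' h 0 ω).1 = ω' := by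
  obtain ⟨T, hT⟩ := h.surjective (Quot.mk _ (ω', (0 : Rd d)))
  obtain ⟨p, rfl⟩ := Quot.exists_rep T
  obtain ⟨ω₁, y⟩ := p
  have h1 : Quot.mk (suspRel X) (ω₁, y) = y +ᵥ Quot.mk (suspRel X) (ω₁, (0 : Rd d)) := by
    rw [vadd_mk, zero_add]
  have h2 : h (Quot.mk _ (ω₁, (0:Rd d))) = Quot.mk _ (ω', -y) := by
    have e1 : h (Quot.mk _ (ω₁, y)) = y +ᵥ h (Quot.mk _ (ω₁, (0:Rd d))) := by
      rw [h1, hequiv]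
    have e2 : (-y) +ᵥ Quot.mk (suspRel X') (ω', (0:Rd d)) = Quot.mk _ (ω', -y) := by
      rw [vadd_mk, zero_add]
    rw [← susp_neg_vadd_vadd y (h (Quot.mk _ (ω₁, (0:Rd d)))), ← e1, hT, e2]
  have h3 : GG hX' h 0 ω₁ = (shiftX hX' (zfloor (-y)) ω', fracPart (-y)) := by
    unfold GG
    rw [h2, canonRep_mk]
    rfl
  refine ⟨shiftX hX (-(zfloor (-y))) ω₁, ?_⟩
  rw [GG_shift hX hX' h hequiv, h3]
  refine Subtype.ext ?_
  show shift (-(zfloor (-y))) (shift (zfloor (-y)) (ω' : Zd d → A')) = (ω' : Zd d → A')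
  rw [shift_shift]
  simp [shift_zero]

end Main
section Topo

set_option linter.unusedSectionVars false

variable {d : ℕ} {A A' : Type*} [TopologicalSpace A] [TopologicalSpace A']
variable {X : Set (Zd d → A)} {X' : Set (Zd d → A')}

theorem canonRep_snd_mem (hX' : IsSubshift X') (T : Susp X') (i : Fin d) :
    (canonRep hX' T).2 i ∈ Set.Ico (0:ℝ) 1 := by
  induction T using Quot.ind with
  | _ p =>
    rw [canonRep_mk]
    exact ⟨fracPart_nonneg p.2 i, fracPart_lt_one p.2 i⟩

theorem int_eq_zero_of_Ico {z : ℤ} {y : ℝ} (h1 : 0 ≤ y) (h2 : y < 1)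
    (h3 : 0 < y + z) (h4 : y + z < 1) : z = 0 := by
  have hz1 : (-1 : ℝ) < (z : ℝ) := by linarith
  have hz2 : (z : ℝ) < 1 := by linarith
  have hz1' : (-1 : ℤ) < z := by exact_mod_cast hz1
  have hz2' : z < 1 := by exact_mod_cast hz2
  omega

theorem mem_V_iff [DiscreteTopology A'] (hX' : IsSubshift X')
    {a : A'} {p q : X' × Rd d} (hpq : suspRel X' p q)
    (hp : ∃ nn : Zd d, (p.1 : Zd d → A') nn = a ∧ ∀ i, p.2 i + (nn i : ℝ) ∈ Set.Ioo (0:ℝ) 1) :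
    ∃ nn : Zd d, (q.1 : Zd d → A') nn = a ∧ ∀ i, q.2 i + (nn i : ℝ) ∈ Set.Ioo (0:ℝ) 1 := by
  obtain ⟨n, h1, h2⟩ := hpq
  obtain ⟨nn, ha, hb⟩ := hp
  refine ⟨nn + n, ?_, ?_⟩
  · rw [h1]
    show (p.1 : Zd d → A') (nn + n - n) = a
    simpa using ha
  · intro i
    rw [h2]
    have : (p.2 - toRd n) i + ((nn + n) i : ℝ) = p.2 i + (nn i : ℝ) := by
      show p.2 i - (n i : ℝ) + ((nn i + n i : ℤ) : ℝ) = p.2 i + (nn i : ℝ)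
      push_cast; ring
    rw [this]
    exact hb i

/-- Local constancy of the reading map. -/
theorem RR_locally_constant [DiscreteTopology A']
    (hX : IsSubshift X) (hX' : IsSubshift X') (h : Susp X ≃ₜ Susp X')
    (hequiv : ∀ (t : Rd d) (T : Susp X), h (t +ᵥ T) = t +ᵥ h T)
    (v : Rd d) (ω₀ : X) (hω₀ : ∀ i, (GG hX' h v ω₀).2 i ∈ Set.Ioo (0:ℝ) 1) :
    ∃ U : Set X, IsOpen U ∧ ω₀ ∈ U ∧ ∀ ω ∈ U, RR hX' h v ω = RR hX' h v ω₀ := by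
  set a := RR hX' h v ω₀ with ha
  set V : Set (X' × Rd d) :=
    {p | ∃ nn : Zd d, (p.1 : Zd d → A') nn = a ∧ ∀ i, p.2 i + (nn i : ℝ) ∈ Set.Ioo (0:ℝ) 1}
    with hV
  have hVopen : IsOpen V := by
    have : V = ⋃ nn : Zd d,
        ((fun p : X' × Rd d => (p.1 : Zd d → A') nn) ⁻¹' {a} ∩
          ⋂ i : Fin d, (fun p : X' × Rd d => p.2 i + (nn i : ℝ)) ⁻¹' Set.Ioo (0:ℝ) 1) := by
      ext p
      simp only [Set.mem_iUnion, Set.mem_inter_iff, Set.mem_preimage, Set.mem_singleton_iff,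
        Set.mem_iInter, hV, Set.mem_setOf_eq]
    rw [this]
    refine isOpen_iUnion fun nn => IsOpen.inter ?_ ?_
    · refine IsOpen.preimage ?_ (isOpen_discrete _)
      exact (continuous_apply nn).comp (continuous_subtype_val.comp continuous_fst)
    · refine isOpen_iInter_of_finite fun i => IsOpen.preimage ?_ isOpen_Ioo
      exact ((PiLp.continuous_apply 2 _ i).comp continuous_snd).add continuous_const
  have hVsat : ∀ p q : X' × Rd d, suspRel X' p q → (p ∈ V → q ∈ V) := by
    intro p q hpq hp
    exact mem_V_iff hX' hpq hp
  set W : Set (Susp X') := Quot.mk (suspRel X') '' V with hW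
  have hpre : Quot.mk (suspRel X') ⁻¹' W = V := by
    ext q
    constructor
    · rintro ⟨p, hpV, hpq⟩
      exact hVsat p q (susp_mk_eq_iff.1 hpq) hpV
    · intro hq
      exact ⟨q, hq, rfl⟩
  have hWopen : IsOpen W := by
    rw [← isQuotientMap_quot_mk.isOpen_preimage, hpre]
    exact hVopen
  refine ⟨(fun ω : X => h (Quot.mk _ (ω, v))) ⁻¹' W, ?_, ?_, ?_⟩
  · refine IsOpen.preimage ?_ hWopen
    exact h.continuous.comp (continuous_quot_mk.comp (continuous_id.prodMk continuous_const))
  · show h (Quot.mk _ (ω₀, v)) ∈ W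
    rw [← canonRep_spec hX' (h (Quot.mk _ (ω₀, v)))]
    refine ⟨canonRep hX' (h (Quot.mk _ (ω₀, v))), ?_, rfl⟩
    refine ⟨0, ha.symm, fun i => ?_⟩
    have := hω₀ i
    simpa [GG] using this
  · intro ω hω
    have h1 : GG hX' h v ω ∈ V := by
      rw [← hpre]
      show Quot.mk _ (GG hX' h v ω) ∈ W
      have e : Quot.mk (suspRel X') (GG hX' h v ω) = h (Quot.mk _ (ω, v)) :=
        canonRep_spec hX' _
      rw [e]
      exact hω
    obtain ⟨nn, h2, h3⟩ := h1
    have hnn : nn = 0 := by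
      funext i
      have hy := canonRep_snd_mem hX' (h (Quot.mk _ (ω, v))) i
      have h3i := h3 i
      exact int_eq_zero_of_Ico hy.1 hy.2 h3i.1 h3i.2
    rw [hnn] at h2
    exact h2

/-- Every open nbhd in a subshift contains a box cylinder. -/
theorem exists_box_cylinder [DiscreteTopology A] {U : Set X} (hU : IsOpen U) {ω₀ : X}
    (hω₀ : ω₀ ∈ U) :
    ∃ ρ : ℕ, ∀ ω : X, (∀ l ∈ box d ρ, (ω : Zd d → A) l = (ω₀ : Zd d → A) l) → ω ∈ U := by
  obtain ⟨U', hU', hUU⟩ := isOpen_induced_iff.1 hU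
  have hmem : (ω₀ : Zd d → A) ∈ U' := by
    have : ω₀ ∈ Subtype.val ⁻¹' U' := by rw [hUU]; exact hω₀
    exact this
  obtain ⟨I, u, hIu, hsub⟩ := isOpen_pi_iff.1 hU' _ hmem
  classical
  refine ⟨I.sup (fun k => Finset.univ.sup fun i => (k i).natAbs), fun ω hω => ?_⟩
  have : (ω : Zd d → A) ∈ U' := by
    apply hsub
    intro k hk
    have hkbox : k ∈ box d (I.sup (fun k => Finset.univ.sup fun i => (k i).natAbs)) := by
      intro i
      have h1 : (k i).natAbs ≤ Finset.univ.sup fun i => (k i).natAbs :=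
        Finset.le_sup (f := fun i => (k i).natAbs) (Finset.mem_univ i)
      have h2 : (Finset.univ.sup fun i => (k i).natAbs) ≤
          I.sup (fun k => Finset.univ.sup fun i => (k i).natAbs) :=
        Finset.le_sup (f := fun k => Finset.univ.sup fun i => (k i).natAbs) hk
      have : (k i).natAbs ≤ I.sup (fun k => Finset.univ.sup fun i => (k i).natAbs) :=
        le_trans h1 h2
      rw [Int.abs_eq_natAbs]
      exact_mod_cast this
    rw [hω k hkbox]
    exact (hIu k hk).2
  rw [← hUU]
  exact this

theorem box_mono {a b : ℕ} (hab : a ≤ b) : box d a ⊆ box d b := by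
  intro k hk i
  exact le_trans (hk i) (by exact_mod_cast hab)

end Topo
section Det

set_option linter.unusedSectionVars false

variable {d : ℕ} {A A' : Type*} [TopologicalSpace A] [TopologicalSpace A']
variable {X : Set (Zd d → A)} {X' : Set (Zd d → A')}

theorem fract_Icc_closed : IsClosed {y : ℝ | Int.fract y ∈ Set.Icc (4⁻¹ : ℝ) (3/4)} := by
  rw [← isOpen_compl_iff]
  have hset : {y : ℝ | Int.fract y ∈ Set.Icc (4⁻¹ : ℝ) (3/4)}ᶜ =
      ⋃ n : ℤ, Set.Ioo ((n : ℝ) - 4⁻¹) ((n : ℝ) + 4⁻¹) := by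
    ext y
    simp only [Set.mem_compl_iff, Set.mem_setOf_eq, Set.mem_Icc, Set.mem_iUnion, Set.mem_Ioo,
      not_and, not_le]
    have hfl : Int.fract y = y - ⌊y⌋ := rfl
    have hf0 : 0 ≤ Int.fract y := Int.fract_nonneg y
    have hf1 : Int.fract y < 1 := Int.fract_lt_one y
    have hfloorle : ((⌊y⌋ : ℤ) : ℝ) ≤ y := Int.floor_le y
    have hltfloor : y < (⌊y⌋ : ℝ) + 1 := Int.lt_floor_add_one y
    constructor
    · intro hy
      by_cases hc : Int.fract y < 4⁻¹
      · exact ⟨⌊y⌋, by linarith, by linarith⟩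
      · have hq : 3/4 < Int.fract y := hy (by linarith)
        refine ⟨⌊y⌋ + 1, ?_, ?_⟩ <;> push_cast <;> linarith
    · rintro ⟨n, hl, hr⟩
      rcases le_or_gt (n : ℝ) y with hc | hc
      · have hfloor : ⌊y⌋ = n := by
          rw [Int.floor_eq_iff]
          constructor
          · exact hc
          · push_cast; linarith
        intro habs
        rw [hfl, hfloor] at habs ⊢
        linarith
      · have hfloor : ⌊y⌋ = n - 1 := by
          rw [Int.floor_eq_iff]
          constructor <;> push_cast <;> linarith
        intro habs
        rw [hfl, hfloor] at habs ⊢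
        push_cast at habs ⊢
        linarith
  rw [hset]
  exact isOpen_iUnion fun n => isOpen_Ioo

theorem Xv_closed [DiscreteTopology A'] (hX' : IsSubshift X') (h : Susp X ≃ₜ Susp X')
    (v : Rd d) :
    IsClosed {ω : X | ∀ i, (GG hX' h v ω).2 i ∈ Set.Icc (4⁻¹ : ℝ) (3/4)} := by
  have hD : IsClosed {T : Susp X' | ∀ i, (canonRep hX' T).2 i ∈ Set.Icc (4⁻¹ : ℝ) (3/4)} := by
    rw [← isQuotientMap_quot_mk.isClosed_preimage]
    have : Quot.mk (suspRel X') ⁻¹'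
        {T : Susp X' | ∀ i, (canonRep hX' T).2 i ∈ Set.Icc (4⁻¹ : ℝ) (3/4)} =
        ⋂ i : Fin d, (fun p : X' × Rd d => p.2 i) ⁻¹'
          {y : ℝ | Int.fract y ∈ Set.Icc (4⁻¹ : ℝ) (3/4)} := by
      ext p
      simp only [Set.mem_preimage, Set.mem_setOf_eq, Set.mem_iInter]
      rfl
    rw [this]
    exact isClosed_iInter fun i =>
      IsClosed.preimage ((PiLp.continuous_apply 2 _ i).comp continuous_snd) fract_Icc_closed
  have : {ω : X | ∀ i, (GG hX' h v ω).2 i ∈ Set.Icc (4⁻¹ : ℝ) (3/4)} =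
      (fun ω : X => h (Quot.mk _ (ω, v))) ⁻¹'
        {T : Susp X' | ∀ i, (canonRep hX' T).2 i ∈ Set.Icc (4⁻¹ : ℝ) (3/4)} := rfl
  rw [this]
  exact IsClosed.preimage
    (h.continuous.comp (continuous_quot_mk.comp (continuous_id.prodMk continuous_const))) hD

theorem box_finite (d n : ℕ) : (box d n).Finite := by
  refine Set.Finite.subset (Set.Finite.pi (fun i : Fin d => Set.finite_Icc (-(n:ℤ)) n)) ?_
  intro k hk
  rw [Set.mem_pi]
  intro i _
  exact abs_le.1 (hk i)

/-- Uniform local determination of the reading map on the good closed set. -/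
theorem uniform_det [Finite A] [DiscreteTopology A] [DiscreteTopology A']
    (hX : IsSubshift X) (hX' : IsSubshift X') (h : Susp X ≃ₜ Susp X')
    (hequiv : ∀ (t : Rd d) (T : Susp X), h (t +ᵥ T) = t +ᵥ h T) (v : Rd d) :
    ∃ r : ℕ, ∀ ω₁ : X, (∀ i, (GG hX' h v ω₁).2 i ∈ Set.Icc (4⁻¹ : ℝ) (3/4)) →
      ∀ ω₂ : X, (∀ l ∈ box d r, (ω₂ : Zd d → A) l = (ω₁ : Zd d → A) l) →
        RR hX' h v ω₂ = RR hX' h v ω₁ := by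
  classical
  haveI : CompactSpace (Zd d → A) := by infer_instance
  haveI : CompactSpace X := isCompact_iff_compactSpace.1 hX.closed.isCompact
  set K := {ω : X | ∀ i, (GG hX' h v ω).2 i ∈ Set.Icc (4⁻¹ : ℝ) (3/4)} with hKdef
  have hK : IsCompact K := (Xv_closed hX' h v).isCompact
  have hloc : ∀ ω₀ : X, ω₀ ∈ K → ∃ ρ : ℕ, ∀ ω : X,
      (∀ l ∈ box d ρ, (ω : Zd d → A) l = (ω₀ : Zd d → A) l) → RR hX' h v ω = RR hX' h v ω₀ := by
    intro ω₀ hω₀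
    have hIoo : ∀ i, (GG hX' h v ω₀).2 i ∈ Set.Ioo (0:ℝ) 1 := by
      intro i
      have := hω₀ i
      constructor
      · have : (4⁻¹:ℝ) ≤ (GG hX' h v ω₀).2 i := (hω₀ i).1
        linarith
      · have : (GG hX' h v ω₀).2 i ≤ 3/4 := (hω₀ i).2
        linarith
    obtain ⟨U, hUo, hU0, hconst⟩ := RR_locally_constant hX hX' h hequiv v ω₀ hIoo
    obtain ⟨ρ, hρ⟩ := exists_box_cylinder hUo hU0
    exact ⟨ρ, fun ω hagree => hconst ω (hρ ω hagree)⟩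
  choose! ρfn hρfn using hloc
  set Us : K → Set X := fun z => {ω : X | ∀ l ∈ box d (ρfn z.1), (ω : Zd d → A) l = (z.1 : Zd d → A) l}
    with hUs
  have hUsopen : ∀ z : K, IsOpen (Us z) := by
    intro z
    have : Us z = ⋂ l ∈ box d (ρfn z.1),
        {ω : X | (ω : Zd d → A) l = (z.1 : Zd d → A) l} := by
      ext ω
      simp only [hUs, Set.mem_setOf_eq, Set.mem_iInter]
    rw [this]
    refine (box_finite d (ρfn z.1)).isOpen_biInter fun l _ => ?_
    have : {ω : X | (ω : Zd d → A) l = (z.1 : Zd d → A) l} =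
        (fun ω : X => (ω : Zd d → A) l) ⁻¹' {(z.1 : Zd d → A) l} := rfl
    rw [this]
    exact IsOpen.preimage ((continuous_apply l).comp continuous_subtype_val) (isOpen_discrete _)
  have hcover : K ⊆ ⋃ z : K, Us z := by
    intro ω hω
    exact Set.mem_iUnion.2 ⟨⟨ω, hω⟩, fun l _ => rfl⟩
  obtain ⟨t, ht⟩ := hK.elim_finite_subcover Us hUsopen hcover
  refine ⟨t.sup (fun z => ρfn z.1), fun ω₁ hω₁ ω₂ hagree => ?_⟩
  obtain ⟨z, hzt, hz⟩ : ∃ z ∈ t, ω₁ ∈ Us z := by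
    have := ht hω₁
    simpa using this
  have e1 : RR hX' h v ω₁ = RR hX' h v z.1 := hρfn z.1 z.2 ω₁ hz
  have e2 : RR hX' h v ω₂ = RR hX' h v z.1 := by
    refine hρfn z.1 z.2 ω₂ fun l hl => ?_
    have hlr : l ∈ box d (t.sup (fun z => ρfn z.1)) :=
      box_mono (Finset.le_sup (f := fun z : K => ρfn z.1) hzt) hl
    rw [hagree l hlr]
    exact hz l hl
  rw [e1, e2]

noncomputable def vB {d : ℕ} (b : Fin d → Bool) : Rd d := WithLp.toLp 2 (fun i => if b i then (2⁻¹ : ℝ) else 0)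

def mzc {d : ℕ} (c : Fin d → Bool) : Zd d := fun i => if c i then 1 else 0

theorem exists_good_b [DiscreteTopology A'] (hX' : IsSubshift X') (h : Susp X ≃ₜ Susp X')
    (hequiv : ∀ (t : Rd d) (T : Susp X), h (t +ᵥ T) = t +ᵥ h T) (ω : X) :
    ∃ b : Fin d → Bool, ∀ i, (GG hX' h (vB b) ω).2 i ∈ Set.Icc (4⁻¹ : ℝ) (3/4) := by
  classical
  set τ := (GG hX' h 0 ω).2 with hτdef
  have hτ : ∀ i, τ i ∈ Set.Ico (0:ℝ) 1 := fun i => canonRep_snd_mem hX' _ i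
  set b : Fin d → Bool := fun i => if τ i < 4⁻¹ ∨ 3/4 < τ i then true else false with hbdef
  refine ⟨b, fun i => ?_⟩
  have hg := GG_v hX' h hequiv (vB b) ω
  rw [hg]
  show Int.fract (τ i + vB b i) ∈ Set.Icc (4⁻¹ : ℝ) (3/4)
  by_cases hbi : τ i < 4⁻¹ ∨ 3/4 < τ i
  · have hv : vB b i = 2⁻¹ := by simp [vB, hbdef, hbi]
    rw [hv]
    rcases hbi with hlt | hgt
    · rw [Int.fract_eq_self.2 ⟨by linarith [(hτ i).1], by linarith⟩]
      constructor <;> linarith [(hτ i).1]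
    · have e : Int.fract (τ i + 2⁻¹) = Int.fract (τ i + 2⁻¹ - (1:ℤ)) :=
        (Int.fract_sub_intCast _ _).symm
      rw [e, Int.fract_eq_self.2 ⟨by push_cast; linarith, by push_cast; linarith [(hτ i).2]⟩]
      constructor <;> push_cast <;> linarith [(hτ i).2]
  · have hv : vB b i = 0 := by simp [vB, hbdef, hbi]
    rw [hv, add_zero, Int.fract_eq_self.2 ⟨(hτ i).1, (hτ i).2⟩]
    push_neg at hbi
    exact ⟨hbi.1, hbi.2⟩

theorem exists_mzc (hX' : IsSubshift X') (h : Susp X ≃ₜ Susp X') (ω : X) (b : Fin d → Bool) :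
    ∃ c : Fin d → Bool, zfloor ((GG hX' h 0 ω).2 + vB b) = mzc c := by
  classical
  set τ := (GG hX' h 0 ω).2 with hτdef
  have hτ : ∀ i, τ i ∈ Set.Ico (0:ℝ) 1 := fun i => canonRep_snd_mem hX' _ i
  refine ⟨fun i => if zfloor (τ + vB b) i = 1 then true else false, ?_⟩
  funext i
  have hv0 : (0:ℝ) ≤ vB b i := by unfold vB; dsimp only; split <;> norm_num
  have hv1 : vB b i ≤ 2⁻¹ := by unfold vB; dsimp only; split <;> norm_num
  have hx : (τ + vB b) i = τ i + vB b i := rfl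
  have h0 : 0 ≤ zfloor (τ + vB b) i := by
    refine Int.floor_nonneg.2 ?_
    rw [hx]
    linarith [(hτ i).1]
  have h2 : zfloor (τ + vB b) i < 2 := by
    refine Int.floor_lt.2 ?_
    rw [hx]
    push_cast
    linarith [(hτ i).2]
  unfold mzc
  by_cases hcond : zfloor (τ + vB b) i = 1
  · simp [hcond]
  · have h00 : zfloor (τ + vB b) i = 0 := by omega
    simp [hcond, h00]

end Det
section Count

set_option linter.unusedSectionVars false

theorem ncard_iUnion_le' {α ι : Type*} [Fintype ι] (s : ι → Set α) :
    (⋃ i, s i).ncard ≤ ∑ i, (s i).ncard := by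
  classical
  have h : ∀ t : Finset ι, (⋃ i ∈ t, s i).ncard ≤ ∑ i ∈ t, (s i).ncard := by
    intro t
    induction t using Finset.induction_on with
    | empty => simp
    | insert _ _ hnot ih =>
      rw [Finset.set_biUnion_insert, Finset.sum_insert hnot]
      exact le_trans (Set.ncard_union_le _ _) (Nat.add_le_add_left ih _)
  have h2 := h Finset.univ
  simpa using h2

variable {d : ℕ} {A A' : Type*}
variable [Fintype A] [TopologicalSpace A] [DiscreteTopology A]
variable [Fintype A'] [Nonempty A'] [TopologicalSpace A'] [DiscreteTopology A']
variable {X : Set (Zd d → A)} {X' : Set (Zd d → A')}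

open Classical in
noncomputable def Psi (hX : IsSubshift X) (hX' : IsSubshift X') (h : Susp X ≃ₜ Susp X')
    (n mm : ℕ) (b c : Fin d → Bool) (P : box d mm → A) : box d n → A' :=
  if hP : ∃ ω : X, (fun k : box d mm => (ω : Zd d → A) k.1) = P then
    fun k => RR hX' h (vB b) (shiftX hX (-(mzc c + k.1)) hP.choose)
  else fun _ => Classical.arbitrary A'

theorem key_complexity (hX : IsSubshift X) (hX' : IsSubshift X') (h : Susp X ≃ₜ Susp X')
    (hequiv : ∀ (t : Rd d) (T : Susp X), h (t +ᵥ T) = t +ᵥ h T) :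
    ∃ r : ℕ, ∀ n : ℕ, complexity X' n ≤ 4 ^ d * complexity X (n + r) := by
  classical
  have hdet := fun b : Fin d → Bool => uniform_det hX hX' h hequiv (vB b)
  choose rfn hrfn using hdet
  set r₀ := Finset.univ.sup rfn with hr0
  refine ⟨r₀ + 1, fun n => ?_⟩
  set mm := n + (r₀ + 1) with hmm
  -- the inclusion
  have claim : (fun ω' => fun k : box d n => ω' k.1) '' X' ⊆
      ⋃ b : Fin d → Bool, ⋃ c : Fin d → Bool,
        Psi hX hX' h n mm b c '' ((fun ω => fun k : box d mm => ω k.1) '' X) := by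
    rintro _ ⟨ω', hω', rfl⟩
    obtain ⟨ωs, hσ⟩ := sigma_surj hX hX' h hequiv ⟨ω', hω'⟩
    obtain ⟨b, hb⟩ := exists_good_b hX' h hequiv ωs
    obtain ⟨c, hc⟩ := exists_mzc hX' h ωs b
    refine Set.mem_iUnion.2 ⟨b, Set.mem_iUnion.2 ⟨c, ⟨_, ⟨ωs.1, ωs.2, rfl⟩, ?_⟩⟩⟩
    have hP : ∃ ω : X, (fun k : box d mm => (ω : Zd d → A) k.1) =
        (fun k : box d mm => (ωs : Zd d → A) k.1) := ⟨ωs, rfl⟩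
    show Psi hX hX' h n mm b c (fun k : box d mm => (ωs : Zd d → A) k.1) =
      fun k : box d n => ω' k.1
    unfold Psi
    rw [dif_pos hP]
    funext k
    set j : Zd d := mzc c + k.1 with hj
    set ωf := hP.choose with hωf
    have hPeq := hP.choose_spec
    -- bounds on mzc and k
    have hmz : ∀ i, 0 ≤ mzc c i ∧ mzc c i ≤ 1 := by
      intro i; unfold mzc; split <;> omega
    -- step A : agreement
    have hXv : ∀ i, (GG hX' h (vB b) (shiftX hX (-j) ωs)).2 i ∈ Set.Icc (4⁻¹:ℝ) (3/4) := by
      rw [GG_shift hX hX' h hequiv]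
      exact hb
    have hagree : ∀ l ∈ box d (rfn b),
        ((shiftX hX (-j) ωf : X) : Zd d → A) l = ((shiftX hX (-j) ωs : X) : Zd d → A) l := by
      intro l hl
      show (ωf : Zd d → A) (l - -j) = (ωs : Zd d → A) (l - -j)
      have hidx : l - -j ∈ box d mm := by
        intro i
        have h1 : |l i| ≤ (rfn b : ℤ) := hl i
        have h2 : (rfn b : ℤ) ≤ (r₀ : ℤ) := by
          exact_mod_cast Finset.le_sup (f := rfn) (Finset.mem_univ b)
        have h3 : |k.1 i| ≤ (n : ℤ) := k.2 i
        have h4 := hmz i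
        have h5 : (l - -j) i = l i + (mzc c i + k.1 i) := by
          show l i - -(mzc c i + k.1 i) = _
          ring
        rw [h5, hmm]
        push_cast
        rw [abs_le] at h1 h3 ⊢
        constructor <;> linarith [h1.1, h1.2, h3.1, h3.2, h4.1, h4.2]
      exact congrFun hPeq ⟨l - -j, hidx⟩
    have eA : RR hX' h (vB b) (shiftX hX (-j) ωf) = RR hX' h (vB b) (shiftX hX (-j) ωs) :=
      hrfn b (shiftX hX (-j) ωs) hXv (shiftX hX (-j) ωf) hagree
    -- step B : value
    have eB : RR hX' h (vB b) (shiftX hX (-j) ωs) = ω' k.1 := by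
      rw [RR_shift hX hX' h hequiv, GG_v hX' h hequiv, hc, hσ]
      show shift (mzc c) ω' (- -j) = ω' k.1
      show ω' (- -j - mzc c) = ω' k.1
      congr 1
      rw [hj]
      funext i
      show -(-(mzc c i + k.1 i)) - mzc c i = k.1 i
      ring
    exact eA.trans eB
  -- counting
  haveI : Finite ↥(box d n) := (box_finite d n).to_subtype
  haveI : Finite ↥(box d mm) := (box_finite d mm).to_subtype
  have hfin : ∀ s : Set (↥(box d n) → A'), s.Finite := fun s => s.toFinite
  have hfinA : ∀ s : Set (↥(box d mm) → A), s.Finite := fun s => s.toFinite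
  have step1 : complexity X' n ≤
      (⋃ b : Fin d → Bool, ⋃ c : Fin d → Bool,
        Psi hX hX' h n mm b c '' ((fun ω => fun k : box d mm => ω k.1) '' X)).ncard :=
    Set.ncard_le_ncard claim (hfin _)
  have step2 : (⋃ b : Fin d → Bool, ⋃ c : Fin d → Bool,
        Psi hX hX' h n mm b c '' ((fun ω => fun k : box d mm => ω k.1) '' X)).ncard ≤
      ∑ b : Fin d → Bool, ∑ c : Fin d → Bool,
        (Psi hX hX' h n mm b c '' ((fun ω => fun k : box d mm => ω k.1) '' X)).ncard := by
    refine le_trans (ncard_iUnion_le' _) ?_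
    exact Finset.sum_le_sum fun b _ => ncard_iUnion_le' _
  have step3 : ∀ b c : Fin d → Bool,
      (Psi hX hX' h n mm b c '' ((fun ω => fun k : box d mm => ω k.1) '' X)).ncard ≤
        complexity X mm := fun b c => Set.ncard_image_le (hfinA _)
  have step4 : ∑ b : Fin d → Bool, ∑ c : Fin d → Bool,
      (Psi hX hX' h n mm b c '' ((fun ω => fun k : box d mm => ω k.1) '' X)).ncard ≤
      4 ^ d * complexity X mm := by
    have hcard : Fintype.card (Fin d → Bool) = 2 ^ d := by
      rw [Fintype.card_fun]
      simp
    calc ∑ b : Fin d → Bool, ∑ c : Fin d → Bool,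
        (Psi hX hX' h n mm b c '' ((fun ω => fun k : box d mm => ω k.1) '' X)).ncard
        ≤ ∑ _b : Fin d → Bool, ∑ _c : Fin d → Bool, complexity X mm :=
          Finset.sum_le_sum fun b _ => Finset.sum_le_sum fun c _ => step3 b c
      _ = 2 ^ d * (2 ^ d * complexity X mm) := by
          simp [Finset.sum_const, Finset.card_univ, hcard, mul_assoc]
      _ = 4 ^ d * complexity X mm := by
          rw [← mul_assoc, ← mul_pow]; norm_num
  exact le_trans step1 (le_trans step2 step4)

end Count

theorem frank_sadun_conjugacy_complexity
    {d : ℕ} (hd : 1 ≤ d)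
    {A A' : Type*} [Fintype A] [Nonempty A] [TopologicalSpace A] [DiscreteTopology A]
    [Fintype A'] [Nonempty A'] [TopologicalSpace A'] [DiscreteTopology A']
    (X : Set (Zd d → A)) (X' : Set (Zd d → A'))
    (hX : IsSubshift X) (hX' : IsSubshift X')
    (hXmin : IsMinimal X) (hX'min : IsMinimal X')
    (hXap : IsAperiodic X) (hX'ap : IsAperiodic X')
    (h : Susp X ≃ₜ Susp X')
    (hequiv : ∀ (t : Rd d) (T : Susp X), h (t +ᵥ T) = t +ᵥ h T) :
    ∃ m M : ℝ, 0 < m ∧ 0 < M ∧ ∃ a b N : ℕ, ∀ n : ℕ, max N a ≤ n →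
      m * (complexity X (n - a) : ℝ) ≤ (complexity X' n : ℝ) ∧
      (complexity X' n : ℝ) ≤ M * (complexity X (n + b) : ℝ) := by
  have hequiv' : ∀ (t : Rd d) (T' : Susp X'), h.symm (t +ᵥ T') = t +ᵥ h.symm T' := by
    intro t T'
    apply h.injective
    rw [h.apply_symm_apply, hequiv, h.apply_symm_apply]
  obtain ⟨r1, h1⟩ := key_complexity hX hX' h hequiv
  obtain ⟨r2, h2⟩ := key_complexity hX' hX h.symm hequiv'
  refine ⟨((4:ℝ)^d)⁻¹, (4:ℝ)^d, by positivity, by positivity, r2, r1, 0, fun n hn => ?_⟩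
  have hna : r2 ≤ n := le_trans (le_max_right 0 r2) hn
  have hpos : (0:ℝ) < 4 ^ d := by positivity
  constructor
  · have hc : (complexity X (n - r2) : ℝ) ≤ (4:ℝ)^d * (complexity X' n : ℝ) := by
      have h3 := h2 (n - r2)
      rw [Nat.sub_add_cancel hna] at h3
      exact_mod_cast h3
    calc ((4:ℝ)^d)⁻¹ * (complexity X (n - r2) : ℝ)
        ≤ ((4:ℝ)^d)⁻¹ * ((4:ℝ)^d * (complexity X' n : ℝ)) :=
          mul_le_mul_of_nonneg_left hc (by positivity)
      _ = (complexity X' n : ℝ) := by field_simp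
  · exact_mod_cast h1 n
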